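/- For any convex body $K\subset\mathbb{R}^n$ containing the origin, the polar of the difference body satisfies $\mathrm{vol}_n((DK)^\circ) \le 2^{-n}\,\mathrm{vol}_n(K^\circ)$, where $DK=K+(-K)$. -/

import Mathlib

open MeasureTheory Pointwise RealInnerProductSpace

noncomputable abbrev E (n : ℕ) := EuclideanSpace ℝ (Fin n)

/-- The polar body `K° = {x : ⟨x,y⟩ ≤ 1 ∀ y ∈ K}`. -/
def polarBody {V : Type*} [NormedAddCommGroup V] [InnerProductSpace ℝ V] (K : Set V) :
    Set V :=
  {x | ∀ y ∈ K, ⟪x, y⟫ ≤ 1}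

open Real Set Filter
open scoped ENNReal NNReal Topology

/-- `∫_0^∞ e^{-t} t^n dt = n!` as a lower integral. -/
lemma aux_lint_gamma (n : ℕ) :
    ∫⁻ t in Set.Ioi (0:ℝ), ENNReal.ofReal (Real.exp (-t) * t ^ n) = ENNReal.ofReal (n.factorial : ℝ) := by
  have hint : IntegrableOn (fun t : ℝ => Real.exp (-t) * t ^ n) (Set.Ioi 0) := by
    have h := Real.GammaIntegral_convergent (s := (n : ℝ) + 1) (by positivity)
    refine (h.congr_fun (fun x hx => ?_) measurableSet_Ioi)
    have hx0 : (0:ℝ) < x := hx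
    simp only [add_sub_cancel_right, Real.rpow_natCast]
  rw [← MeasureTheory.ofReal_integral_eq_lintegral_ofReal hint
    ((ae_restrict_iff' measurableSet_Ioi).mpr (Filter.Eventually.of_forall fun x hx => by
      have hx0 : (0:ℝ) < x := hx
      positivity))]
  congr 1
  have h1 : Real.Gamma ((n:ℝ) + 1) =
      ∫ x in Set.Ioi (0:ℝ), Real.exp (-x) * x ^ ((n:ℝ) + 1 - 1) :=
    Real.Gamma_eq_integral (by positivity)
  have h2 : Real.Gamma ((n:ℝ) + 1) = (n.factorial : ℝ) := Real.Gamma_nat_eq_factorial n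
  rw [← h2, h1]
  refine setIntegral_congr_fun measurableSet_Ioi fun x hx => ?_
  have hx0 : (0:ℝ) < x := hx
  rw [add_sub_cancel_right, Real.rpow_natCast]

/-- For a continuous nonnegative 1-homogeneous `g`, `∫ e^{-g} = n! vol{g < 1}`. -/
lemma aux_lintegral_exp_neg_gauge {n : ℕ} (g : E n → ℝ) (hg : Continuous g)
    (h0 : ∀ x, 0 ≤ g x) (hom : ∀ t : ℝ, 0 < t → ∀ x, g (t • x) = t * g x) :
    ∫⁻ x, ENNReal.ofReal (Real.exp (-g x)) =
      ENNReal.ofReal (n.factorial : ℝ) * volume {x : E n | g x < 1} := by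
  have hmeas : ∀ t : ℝ, MeasurableSet {x : E n | g x < t} := fun t =>
    measurableSet_lt hg.measurable measurable_const
  have hscale : ∀ t : ℝ, 0 < t → volume {x : E n | g x < t}
      = ENNReal.ofReal (t ^ n) * volume {x : E n | g x < 1} := by
    intro t ht
    have hset : {x : E n | g x < t} = t • {x : E n | g x < 1} := by
      ext x
      simp only [Set.mem_smul_set, Set.mem_setOf_eq]
      constructor
      · intro hx
        refine ⟨t⁻¹ • x, ?_, ?_⟩
        · rw [hom t⁻¹ (by positivity)]
          have := (div_lt_one ht).mpr hx
          rwa [div_eq_inv_mul] at this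
        · rw [smul_smul, mul_inv_cancel₀ ht.ne', one_smul]
      · rintro ⟨y, hy, rfl⟩
        rw [hom t ht]
        calc t * g y < t * 1 := by exact (mul_lt_mul_iff_right₀ ht).mpr hy
          _ = t := mul_one t
    rw [hset, Measure.addHaar_smul, finrank_euclideanSpace_fin,
      abs_of_nonneg (by positivity)]
  have hexp : ∀ a : ℝ, ∫⁻ t in Set.Ioi a, ENNReal.ofReal (Real.exp (-t))
      = ENNReal.ofReal (Real.exp (-a)) := by
    intro a
    have hi : IntegrableOn (fun t : ℝ => Real.exp (-t)) (Set.Ioi a) := by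
      simpa using exp_neg_integrableOn_Ioi a (zero_lt_one)
    rw [← MeasureTheory.ofReal_integral_eq_lintegral_ofReal hi
      (Filter.Eventually.of_forall fun t => (Real.exp_pos _).le)]
    rw [integral_exp_neg_Ioi]
  set F : E n × ℝ → ℝ≥0∞ := fun p =>
    Set.indicator {q : E n × ℝ | g q.1 < q.2} (fun q => ENNReal.ofReal (Real.exp (-q.2))) p
    with hF
  have hFmeas : Measurable F := by
    refine Measurable.indicator ?_ ?_
    · exact ENNReal.measurable_ofReal.comp (Real.measurable_exp.comp measurable_snd.neg)
    · exact measurableSet_lt (hg.comp continuous_fst).measurable continuous_snd.measurable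
  have step1 : ∫⁻ x, ENNReal.ofReal (Real.exp (-g x)) = ∫⁻ x, ∫⁻ t, F (x, t) := by
    refine lintegral_congr fun x => ?_
    have hFx : ∀ t, F (x, t) =
        Set.indicator (Set.Ioi (g x)) (fun t => ENNReal.ofReal (Real.exp (-t))) t := by
      intro t
      by_cases h : g x < t <;> simp [hF, Set.indicator, h, Set.mem_Ioi]
    simp_rw [hFx]
    rw [lintegral_indicator measurableSet_Ioi, hexp (g x)]
  have swap : ∫⁻ x, ∫⁻ t, F (x, t) = ∫⁻ t, ∫⁻ x, F (x, t) :=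
    lintegral_lintegral_swap hFmeas.aemeasurable
  have step2 : ∀ t : ℝ, ∫⁻ x, F (x, t)
      = ENNReal.ofReal (Real.exp (-t)) * volume {x : E n | g x < t} := by
    intro t
    have hFt : ∀ x, F (x, t) =
        Set.indicator {x : E n | g x < t} (fun _ => ENNReal.ofReal (Real.exp (-t))) x := by
      intro x
      by_cases h : g x < t <;> simp [hF, Set.indicator, h]
    simp_rw [hFt]
    rw [lintegral_indicator (hmeas t), setLIntegral_const]
  have step3 : ∫⁻ t, ENNReal.ofReal (Real.exp (-t)) * volume {x : E n | g x < t}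
      = ∫⁻ t in Set.Ioi (0:ℝ),
          ENNReal.ofReal (Real.exp (-t) * t ^ n) * volume {x : E n | g x < 1} := by
    rw [← lintegral_indicator measurableSet_Ioi]
    refine lintegral_congr fun t => ?_
    by_cases ht : 0 < t
    · rw [Set.indicator_of_mem (Set.mem_Ioi.mpr ht), hscale t ht,
        ENNReal.ofReal_mul (Real.exp_pos _).le, mul_assoc]
    · rw [Set.indicator_of_notMem (by simpa using ht)]
      have hempty : {x : E n | g x < t} = ∅ := by
        ext x
        simp only [Set.mem_setOf_eq, Set.mem_empty_iff_false, iff_false, not_lt]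
        exact le_trans (not_lt.mp ht) (h0 x)
      simp [hempty]
  rw [step1, swap]
  simp_rw [step2]
  rw [step3, lintegral_mul_const _ (by
    exact ENNReal.measurable_ofReal.comp
      ((Real.measurable_exp.comp measurable_neg).mul (measurable_id.pow_const n))),
    aux_lint_gamma n]

/-- For a 1-homogeneous `g` with `vol{g<1} < ∞`, `vol{g ≤ 1} ≤ vol{g < 1}`. -/
lemma aux_measure_le_lt {n : ℕ} (g : E n → ℝ)
    (hom : ∀ t : ℝ, 0 < t → ∀ x, g (t • x) = t * g x)
    (hfin : volume {x : E n | g x < 1} ≠ ⊤) :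
    volume {x : E n | g x ≤ 1} ≤ volume {x : E n | g x < 1} := by
  set v := volume {x : E n | g x < 1} with hv
  have hk : ∀ k : ℕ, volume {x : E n | g x ≤ 1}
      ≤ ENNReal.ofReal ((1 + 1/((k:ℝ)+1)) ^ n) * v := by
    intro k
    have hpos : (0:ℝ) < 1 + 1/((k:ℝ)+1) := by positivity
    have hsub : {x : E n | g x ≤ 1} ⊆ (1 + 1/((k:ℝ)+1)) • {x : E n | g x < 1} := by
      intro x hx
      refine ⟨(1 + 1/((k:ℝ)+1))⁻¹ • x, ?_, ?_⟩
      · show g _ < 1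
        rw [hom _ (by positivity)]
        have h1 : (1 + 1/((k:ℝ)+1))⁻¹ < 1 := by
          have h2 : (0:ℝ) < 1/((k:ℝ)+1) := by positivity
          rw [inv_lt_one_iff₀]
          right; linarith
        calc (1 + 1/((k:ℝ)+1))⁻¹ * g x ≤ (1 + 1/((k:ℝ)+1))⁻¹ * 1 :=
              mul_le_mul_of_nonneg_left hx (by positivity)
          _ < 1 := by rw [mul_one]; exact h1
      · show (1 + 1/((k:ℝ)+1)) • (1 + 1/((k:ℝ)+1))⁻¹ • x = x
        rw [smul_smul, mul_inv_cancel₀ hpos.ne', one_smul]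
    calc volume {x : E n | g x ≤ 1} ≤ volume ((1 + 1/((k:ℝ)+1)) • {x : E n | g x < 1}) :=
          measure_mono hsub
      _ = ENNReal.ofReal ((1 + 1/((k:ℝ)+1)) ^ n) * v := by
          rw [Measure.addHaar_smul, finrank_euclideanSpace_fin,
            abs_of_nonneg (by positivity)]
  have h1 : Filter.Tendsto (fun k : ℕ => ENNReal.ofReal ((1 + 1/((k:ℝ)+1)) ^ n))
      Filter.atTop (𝓝 1) := by
    have h2 : Filter.Tendsto (fun k : ℕ => (1 + 1/((k:ℝ)+1)) ^ n) Filter.atTop (𝓝 1) := by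
      have h3 : Filter.Tendsto (fun k : ℕ => 1 + 1/((k:ℝ)+1)) Filter.atTop (𝓝 1) := by
        simpa using tendsto_const_nhds.add (tendsto_one_div_add_atTop_nhds_zero_nat (𝕜 := ℝ))
      simpa using h3.pow n
    have := (ENNReal.continuous_ofReal.tendsto 1).comp h2
    simpa [Function.comp_def] using this
  have h4 := ENNReal.Tendsto.mul_const h1 (Or.inr hfin)
  exact ge_of_tendsto' (x := Filter.atTop) (by simpa using h4) hk

/-- For a convex body `K ∋ 0`, `vol((DK)°) ≤ 2⁻ⁿ vol(K°)`, where `DK = K + (-K)`. -/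
theorem stmt7 (n : ℕ) (K : Set (E n))
    (hKcpt : IsCompact K) (hKcvx : Convex ℝ K) (hKint : (interior K).Nonempty)
    (hK0 : (0 : E n) ∈ K) :
    volume (polarBody (K + -K)) ≤
      ENNReal.ofReal ((2 : ℝ) ^ (-(n : ℝ))) * volume (polarBody K) := by
  by_cases hfin : volume (polarBody K) = ⊤
  · rw [hfin, ENNReal.mul_top (ENNReal.ofReal_pos.mpr (by positivity)).ne']
    exact le_top
  -- the support function of K
  set f : E n → ℝ := fun x => sSup ((fun y => ⟪x, y⟫) '' K) with hfdef
  have hcont_inner : ∀ x : E n, Continuous fun y : E n => ⟪x, y⟫ := fun x =>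
    continuous_const.inner continuous_id
  have hne : ∀ x : E n, ((fun y => ⟪x, y⟫) '' K).Nonempty := fun x =>
    ⟨_, Set.mem_image_of_mem _ hK0⟩
  have hbdd : ∀ x : E n, BddAbove ((fun y => ⟪x, y⟫) '' K) := fun x =>
    (hKcpt.image (hcont_inner x)).bddAbove
  have hfle : ∀ (x : E n), ∀ y ∈ K, ⟪x, y⟫ ≤ f x := fun x y hy =>
    le_csSup (hbdd x) (Set.mem_image_of_mem _ hy)
  have hsup_le : ∀ (x : E n) (c : ℝ), (∀ y ∈ K, ⟪x, y⟫ ≤ c) → f x ≤ c := by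
    intro x c hc
    refine csSup_le (hne x) ?_
    rintro _ ⟨y, hy, rfl⟩
    exact hc y hy
  have hf0 : ∀ x, 0 ≤ f x := by
    intro x
    have := hfle x 0 hK0
    simpa [inner_zero_right] using this
  have hom : ∀ t : ℝ, 0 < t → ∀ x, f (t • x) = t * f x := by
    intro t ht x
    have himg : (fun y : E n => ⟪t • x, y⟫) '' K
        = (OrderIso.mulLeft₀ t ht) '' ((fun y : E n => ⟪x, y⟫) '' K) := by
      rw [← Set.image_comp]
      refine Set.image_congr fun y _ => ?_
      show ⟪t • x, y⟫ = t * ⟪x, y⟫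
      exact real_inner_smul_left x y t
    show sSup ((fun y : E n => ⟪t • x, y⟫) '' K) = t * f x
    rw [himg, ← OrderIso.map_csSup' _ (hne x) (hbdd x)]
    rfl
  -- Lipschitz continuity of f
  obtain ⟨R, hRpos, hRsub⟩ := hKcpt.isBounded.subset_closedBall_lt 0 0
  have hyR : ∀ y ∈ K, ‖y‖ ≤ R := by
    intro y hy
    simpa using mem_closedBall_iff_norm.mp (hRsub hy)
  have hlip : ∀ x x' : E n, f x ≤ f x' + R * ‖x - x'‖ := by
    intro x x'
    refine hsup_le x _ fun y hy => ?_
    have h1 : ⟪x - x', y⟫ = ⟪x, y⟫ - ⟪x', y⟫ := inner_sub_left x x' y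
    have h2 : ⟪x - x', y⟫ ≤ ‖x - x'‖ * ‖y‖ :=
      le_trans (real_inner_le_norm _ _) (le_refl _)
    have h3 : ‖x - x'‖ * ‖y‖ ≤ ‖x - x'‖ * R :=
      mul_le_mul_of_nonneg_left (hyR y hy) (norm_nonneg _)
    have h4 : ⟪x', y⟫ ≤ f x' := hfle x' y hy
    nlinarith [h1, h2, h3, h4]
  have hcont : Continuous f := by
    have : LipschitzWith ⟨R, hRpos.le⟩ f := by
      refine LipschitzWith.of_dist_le_mul fun x y => ?_
      rw [Real.dist_eq, abs_sub_le_iff]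
      constructor
      · have := hlip x y
        rw [dist_eq_norm]
        simpa using by change f x ≤ R * ‖x - y‖ + f y; linarith [hlip x y]
      · have := hlip y x
        rw [dist_eq_norm, ← norm_neg (x - y)]
        simpa [neg_sub] using by change f y ≤ R * ‖y - x‖ + f x; linarith [hlip y x, norm_sub_rev x y]
    exact this.continuous
  -- polar bodies via f
  have hpolarK : polarBody K = {x : E n | f x ≤ 1} := by
    ext x
    constructor
    · intro hx
      exact hsup_le x 1 hx
    · intro hx y hy
      exact le_trans (hfle x y hy) hx
  have hpolarD : polarBody (K + -K) = {x : E n | f x + f (-x) ≤ 1} := by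
    ext x
    constructor
    · intro hx
      show f x + f (-x) ≤ 1
      have h1 : f x ≤ 1 - f (-x) := by
        refine hsup_le x _ fun a ha => ?_
        have h2 : f (-x) ≤ 1 - ⟪x, a⟫ := by
          refine hsup_le (-x) _ fun c hc => ?_
          have hmem : a + -c ∈ K + -K :=
            Set.add_mem_add ha (Set.neg_mem_neg.mpr hc)
          have := hx _ hmem
          have hin : ⟪x, a + -c⟫ = ⟪x, a⟫ + ⟪-x, c⟫ := by
            rw [inner_add_right, inner_neg_right, inner_neg_left]
          linarith [this, hin.symm.le, hin.le]
        linarith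
      linarith
    · intro hx w hw
      obtain ⟨a, ha, b, hb, rfl⟩ := Set.mem_add.mp hw
      have hb' : -b ∈ K := Set.mem_neg.mp hb
      have h1 : ⟪x, a⟫ ≤ f x := hfle x a ha
      have h2 : ⟪-x, -b⟫ ≤ f (-x) := hfle (-x) (-b) hb'
      have h3 : ⟪x, a + b⟫ = ⟪x, a⟫ + ⟪-x, -b⟫ := by
        rw [inner_add_right, inner_neg_left, inner_neg_right]
        ring
      have hx' : f x + f (-x) ≤ 1 := hx
      linarith
  -- the gauge of the polar of the difference body
  set h : E n → ℝ := fun x => f x + f (-x) with hhdef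
  have hh0 : ∀ x, 0 ≤ h x := fun x => add_nonneg (hf0 x) (hf0 (-x))
  have hhom_h : ∀ t : ℝ, 0 < t → ∀ x, h (t • x) = t * h x := by
    intro t ht x
    show f (t • x) + f (-(t • x)) = t * (f x + f (-x))
    rw [← smul_neg, hom t ht, hom t ht]
    ring
  have hcont_h : Continuous h := hcont.add (hcont.comp continuous_neg)
  have hsubf : {x : E n | h x ≤ 1} ⊆ {x : E n | f x ≤ 1} := by
    intro x hx
    have h1 : 0 ≤ f (-x) := hf0 (-x)
    have hx' : f x + f (-x) ≤ 1 := hx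
    show f x ≤ 1
    linarith
  have hfinh : volume {x : E n | h x < 1} ≠ ⊤ := by
    refine ne_top_of_le_ne_top hfin ?_
    rw [hpolarK]
    exact measure_mono fun x (hx : h x < 1) => hsubf hx.le
  -- Cauchy–Schwarz step
  have hmeas1 : Measurable fun x : E n => ENNReal.ofReal (Real.exp (-f x)) :=
    ENNReal.measurable_ofReal.comp (Real.measurable_exp.comp hcont.measurable.neg)
  have hmeas2 : Measurable fun x : E n => ENNReal.ofReal (Real.exp (-f (-x))) :=
    ENNReal.measurable_ofReal.comp
      (Real.measurable_exp.comp ((hcont.comp continuous_neg).measurable.neg))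
  have hconj : Real.HolderConjugate 2 2 := Real.HolderConjugate.two_two
  have hsq1 : ∀ x : E n, ENNReal.ofReal (Real.exp (-f x)) ^ (2:ℝ)
      = ENNReal.ofReal (Real.exp (-(2 * f x))) := by
    intro x
    rw [ENNReal.ofReal_rpow_of_pos (Real.exp_pos _), ← Real.exp_mul]
    congr 1
    ring
  have hsq2 : ∀ x : E n, ENNReal.ofReal (Real.exp (-f (-x))) ^ (2:ℝ)
      = ENNReal.ofReal (Real.exp (-(2 * f (-x)))) := by
    intro x
    rw [ENNReal.ofReal_rpow_of_pos (Real.exp_pos _), ← Real.exp_mul]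
    congr 1
    ring
  have hneginv : ∫⁻ x : E n, ENNReal.ofReal (Real.exp (-(2 * f (-x))))
      = ∫⁻ x : E n, ENNReal.ofReal (Real.exp (-(2 * f x))) := by
    have hm : Measurable fun x : E n => ENNReal.ofReal (Real.exp (-(2 * f x))) :=
      ENNReal.measurable_ofReal.comp
        (Real.measurable_exp.comp (hcont.measurable.const_mul 2).neg)
    have := lintegral_map (μ := (volume : Measure (E n))) hm measurable_neg
    rw [Measure.map_neg_eq_self (volume : Measure (E n))] at this
    exact this.symm
  have CS : ∫⁻ x : E n, ENNReal.ofReal (Real.exp (-h x))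
      ≤ ∫⁻ x : E n, ENNReal.ofReal (Real.exp (-(2 * f x))) := by
    have key := ENNReal.lintegral_mul_le_Lp_mul_Lq (volume : Measure (E n)) hconj
      hmeas1.aemeasurable hmeas2.aemeasurable
    have hlhs : ∀ x : E n, ENNReal.ofReal (Real.exp (-f x)) * ENNReal.ofReal (Real.exp (-f (-x)))
        = ENNReal.ofReal (Real.exp (-h x)) := by
      intro x
      rw [← ENNReal.ofReal_mul (Real.exp_pos _).le, ← Real.exp_add]
      show ENNReal.ofReal (Real.exp (-f x + -f (-x))) = _
      congr 2
      show -f x + -f (-x) = -(f x + f (-x))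
      ring
    have e1 : ∫⁻ a : E n, ((fun x : E n => ENNReal.ofReal (Real.exp (-f x))) *
        (fun x : E n => ENNReal.ofReal (Real.exp (-f (-x))))) a
        = ∫⁻ x : E n, ENNReal.ofReal (Real.exp (-h x)) := lintegral_congr fun x => hlhs x
    have e2 : ∫⁻ a : E n, (fun x : E n => ENNReal.ofReal (Real.exp (-f x))) a ^ (2:ℝ)
        = ∫⁻ x : E n, ENNReal.ofReal (Real.exp (-(2 * f x))) := lintegral_congr fun x => hsq1 x
    have e3 : ∫⁻ a : E n, (fun x : E n => ENNReal.ofReal (Real.exp (-f (-x)))) a ^ (2:ℝ)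
        = ∫⁻ x : E n, ENNReal.ofReal (Real.exp (-(2 * f (-x)))) := lintegral_congr fun x => hsq2 x
    rw [e1, e2, e3, hneginv] at key
    refine le_trans key ?_
    rw [← ENNReal.rpow_add_of_nonneg _ _ (by norm_num) (by norm_num)]
    norm_num
  -- identify the two integrals via the gauge formula
  have hInt1 : ∫⁻ x : E n, ENNReal.ofReal (Real.exp (-h x))
      = ENNReal.ofReal (n.factorial : ℝ) * volume {x : E n | h x < 1} :=
    aux_lintegral_exp_neg_gauge h hcont_h hh0 hhom_h
  have hInt2 : ∫⁻ x : E n, ENNReal.ofReal (Real.exp (-(2 * f x)))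
      = ENNReal.ofReal (n.factorial : ℝ) * volume {x : E n | 2 * f x < 1} :=
    aux_lintegral_exp_neg_gauge (fun x => 2 * f x) (continuous_const.mul hcont)
      (fun x => by have := hf0 x; positivity)
      (by intro t ht x; show 2 * f (t • x) = t * (2 * f x); rw [hom t ht]; ring)
  -- scaling: {2f < 1} = 2⁻¹ • {f < 1}
  have hhalf : volume {x : E n | 2 * f x < 1}
      = ENNReal.ofReal ((2:ℝ) ^ (-(n : ℝ))) * volume {x : E n | f x < 1} := by
    have hset : {x : E n | 2 * f x < 1} = (2⁻¹ : ℝ) • {x : E n | f x < 1} := by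
      ext x
      simp only [Set.mem_smul_set, Set.mem_setOf_eq]
      constructor
      · intro hx
        refine ⟨(2:ℝ) • x, ?_, ?_⟩
        · rw [hom 2 two_pos]; linarith
        · rw [smul_smul]; norm_num
      · rintro ⟨y, hy, rfl⟩
        rw [hom 2⁻¹ (by norm_num)]
        linarith
    rw [hset, Measure.addHaar_smul, finrank_euclideanSpace_fin]
    congr 2
    rw [abs_of_nonneg (by positivity)]
    rw [Real.rpow_neg (by norm_num), Real.rpow_natCast, inv_pow]
  -- assemble
  set N : ℝ≥0∞ := ENNReal.ofReal (n.factorial : ℝ) with hN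
  have hN0 : N ≠ 0 := by
    simp only [hN, ne_eq, ENNReal.ofReal_eq_zero, not_le]
    positivity
  have hNtop : N ≠ ⊤ := ENNReal.ofReal_ne_top
  rw [hpolarD, hpolarK]
  rw [← ENNReal.mul_le_mul_iff_right hN0 hNtop]
  calc N * volume {x : E n | f x + f (-x) ≤ 1}
      ≤ N * volume {x : E n | h x < 1} :=
        mul_le_mul_right (aux_measure_le_lt h hhom_h hfinh) N
    _ = ∫⁻ x : E n, ENNReal.ofReal (Real.exp (-h x)) := hInt1.symm
    _ ≤ ∫⁻ x : E n, ENNReal.ofReal (Real.exp (-(2 * f x))) := CS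
    _ = N * volume {x : E n | 2 * f x < 1} := hInt2
    _ = N * (ENNReal.ofReal ((2:ℝ) ^ (-(n : ℝ))) * volume {x : E n | f x < 1}) := by
        rw [hhalf]
    _ ≤ N * (ENNReal.ofReal ((2:ℝ) ^ (-(n : ℝ))) * volume {x : E n | f x ≤ 1}) :=
        mul_le_mul_right (mul_le_mul_right
          (measure_mono fun x (hx : f x < 1) => hx.le) _) _
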